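/- arXiv:2512.20931 — 3 statements merged into one kernel-verified Lean document; each statement's English description precedes it below -/
import Mathlib

section
/- (Observability with redundant constraints, Lemma 1.) Let K ≥ 1, let v₁,…,v_K ∈ ℝ³ and n₁,…,n_K ∈ ℝ³, let V and N be the K×3 matrices with rows vᵢ and nᵢ, and let M be the K×9 matrix whose i-th row is vᵢ ⊗ nᵢ. If rank(M) ≥ 4, then rank(V) ≥ 2, rank(N) ≥ 2, and K ≥ 2; i.e., at least two satellite line-of-sight directions are needed and the local velocity vectors must span a subspace of dimension at least 2. -/
open Matrix

lemma rows_factor_of_rank_le_one {K : ℕ} (A : Matrix (Fin K) (Fin 3) ℝ) (h : A.rank ≤ 1) :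
    ∃ (w : Fin 3 → ℝ) (c : Fin K → ℝ), ∀ i, A i = c i • w := by
  have hT : (Aᵀ).rank ≤ 1 := by rwa [Matrix.rank_transpose]
  rw [Matrix.rank_eq_finrank_span_cols] at hT
  change Module.finrank ℝ (Submodule.span ℝ (Set.range A)) ≤ 1 at hT
  have hP : (Submodule.span ℝ (Set.range A)).IsPrincipal :=
    (Submodule.finrank_le_one_iff_isPrincipal _).mp hT
  obtain ⟨w, hw⟩ := hP
  have hmem : ∀ i, ∃ r : ℝ, r • w = A i := by
    intro i
    have : A i ∈ Submodule.span ℝ (Set.range A) := Submodule.subset_span ⟨i, rfl⟩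
    rw [hw, Submodule.mem_span_singleton] at this
    exact this
  choose c hc using hmem
  exact ⟨w, c, fun i => (hc i).symm⟩

/-- Observability with redundant constraints, Lemma 1:
if the Khatri–Rao measurement matrix `M` (rows `vᵢ ⊗ nᵢ`) has rank at least 4,
then `rank(V) ≥ 2`, `rank(N) ≥ 2`, and `K ≥ 2`. -/
theorem observability_with_redundant_constraints
    (K : ℕ) (hK : 1 ≤ K)
    (v n : Fin K → Fin 3 → ℝ)
    (V N : Matrix (Fin K) (Fin 3) ℝ)
    (M : Matrix (Fin K) (Fin 3 × Fin 3) ℝ)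
    (hV : ∀ i a, V i a = v i a)
    (hN : ∀ i j, N i j = n i j)
    (hM : ∀ i (p : Fin 3 × Fin 3), M i p = v i p.2 * n i p.1)
    (hrank : 4 ≤ M.rank) :
    2 ≤ V.rank ∧ 2 ≤ N.rank ∧ 2 ≤ K := by
  have hK2 : 2 ≤ K := by
    have := M.rank_le_card_height
    simp [Fintype.card_fin] at this
    omega
  refine ⟨?_, ?_, hK2⟩
  · by_contra hlt
    push_neg at hlt
    obtain ⟨w, c, hwc⟩ := rows_factor_of_rank_le_one V (by omega)
    -- v i a = c i * w a
    have hv : ∀ i a, v i a = c i * w a := by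
      intro i a; rw [← hV]; have := congrFun (hwc i) a; simpa using this
    set A : Matrix (Fin K) (Fin 3) ℝ := fun i j => c i * n i j with hA
    set B : Matrix (Fin 3) (Fin 3 × Fin 3) ℝ := fun j p => if p.1 = j then w p.2 else 0 with hB
    have hMAB : M = A * B := by
      ext i p
      rw [hM]
      simp only [Matrix.mul_apply]; simp only [hA, hB]
      rw [Finset.sum_eq_single p.1]
      · simp [hv i p.2]; ring
      · intro b _ hb; simp [Ne.symm hb]
      · simp
    have h1 : M.rank ≤ A.rank := hMAB ▸ Matrix.rank_mul_le_left A B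
    have h2 : A.rank ≤ 3 := by simpa using A.rank_le_card_width
    omega
  · by_contra hlt
    push_neg at hlt
    obtain ⟨w, c, hwc⟩ := rows_factor_of_rank_le_one N (by omega)
    have hn : ∀ i j, n i j = c i * w j := by
      intro i j; rw [← hN]; have := congrFun (hwc i) j; simpa using this
    set A : Matrix (Fin K) (Fin 3) ℝ := fun i a => c i * v i a with hA
    set B : Matrix (Fin 3) (Fin 3 × Fin 3) ℝ := fun a p => if p.2 = a then w p.1 else 0 with hB
    have hMAB : M = A * B := by
      ext i p
      rw [hM]
      simp only [Matrix.mul_apply]; simp only [hA, hB]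
      rw [Finset.sum_eq_single p.2]
      · simp [hn i p.1]; ring
      · intro b _ hb; simp [Ne.symm hb]
      · simp
    have h1 : M.rank ≤ A.rank := hMAB ▸ Matrix.rank_mul_le_left A B
    have h2 : A.rank ≤ 3 := by simpa using A.rank_le_card_width
    omega
end

section
/- (Homogenized feasible set of the alignment QCQP.) Let R be a real 3×3 matrix with columns c₁, c₂, c₃ and let y ∈ ℝ. The constraints RᵀR = y² I₃, R Rᵀ = y² I₃, cᵢ × cⱼ = y · c_k for every cyclic permutation (i,j,k) of (1,2,3), and y² = 1 hold simultaneously if and only if y = 1 or y = −1, and the matrix y·R lies in SO(3) (i.e., (yR)ᵀ(yR) = I₃ and det(yR) = 1). -/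
open Matrix

lemma cross_aux (p q r s t u v w x y : ℝ)
    (hA : p^2+q^2+r^2 = 1) (hB : s^2+t^2+u^2 = 1) (hE : v^2+w^2+x^2 = 1)
    (hC : p*s+q*t+r*u = 0)
    (hD : p*(t*x-u*w) - s*(q*x-r*w) + v*(q*u-r*t) = y)
    (hy : y^2 = 1) :
    q*u - r*t = y*v ∧ r*s - p*u = y*w ∧ p*t - q*s = y*x := by
  have hsum : (q*u-r*t - y*v)^2 + (r*s-p*u - y*w)^2 + (p*t-q*s - y*x)^2 = 0 := by
    linear_combination (s^2+t^2+u^2)*hA + hB - (p*s+q*t+r*u)*hC - 2*y*hD + y^2*hE - hy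
  have e1 : (q*u-r*t - y*v)^2 = 0 := le_antisymm
    (by linarith [sq_nonneg (r*s-p*u - y*w), sq_nonneg (p*t-q*s - y*x)]) (sq_nonneg _)
  have e2 : (r*s-p*u - y*w)^2 = 0 := le_antisymm
    (by linarith [sq_nonneg (q*u-r*t - y*v), sq_nonneg (p*t-q*s - y*x)]) (sq_nonneg _)
  have e3 : (p*t-q*s - y*x)^2 = 0 := le_antisymm
    (by linarith [sq_nonneg (q*u-r*t - y*v), sq_nonneg (r*s-p*u - y*w)]) (sq_nonneg _)
  have f1 := pow_eq_zero_iff (two_ne_zero) |>.mp e1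
  have f2 := pow_eq_zero_iff (two_ne_zero) |>.mp e2
  have f3 := pow_eq_zero_iff (two_ne_zero) |>.mp e3
  refine ⟨by linarith, by linarith, by linarith⟩

/-- Homogenized feasible set of the alignment QCQP: for a real 3×3
matrix `R` with columns `c₁, c₂, c₃` and `y ∈ ℝ`, the constraints
`RᵀR = y²I₃`, `RRᵀ = y²I₃`, `cᵢ × cⱼ = y • c_k` for every cyclic permutation
`(i,j,k)` of `(1,2,3)`, and `y² = 1` hold simultaneously if and only if
`y = 1 ∨ y = -1` and `y • R ∈ SO(3)`. -/
theorem homogenized_feasible_set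
    (R : Matrix (Fin 3) (Fin 3) ℝ) (y : ℝ)
    (c : Fin 3 → Fin 3 → ℝ)
    (hc : ∀ i j, c i j = R j i) :
    (Rᵀ * R = y ^ 2 • (1 : Matrix (Fin 3) (Fin 3) ℝ) ∧
     R * Rᵀ = y ^ 2 • (1 : Matrix (Fin 3) (Fin 3) ℝ) ∧
     c 0 ⨯₃ c 1 = y • c 2 ∧ c 1 ⨯₃ c 2 = y • c 0 ∧ c 2 ⨯₃ c 0 = y • c 1 ∧
     y ^ 2 = 1) ↔
    ((y = 1 ∨ y = -1) ∧ (y • R)ᵀ * (y • R) = 1 ∧ (y • R).det = 1) := by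
  constructor
  · rintro ⟨h1, h2, h3, h4, h5, h6⟩
    have hy : y = 1 ∨ y = -1 := by
      have : (y - 1) * (y + 1) = 0 := by linear_combination h6
      rcases mul_eq_zero.mp this with h | h
      · left; linarith
      · right; linarith
    refine ⟨hy, ?_, ?_⟩
    · have : (y • R)ᵀ * (y • R) = (y^2) • (Rᵀ * R) := by
        rw [Matrix.transpose_smul, Matrix.smul_mul, Matrix.mul_smul, smul_smul]
        ring_nf
      rw [this, h1, smul_smul, h6]
      norm_num
    · have n2 := congrFun (congrFun h1 2) 2
      simp [Matrix.mul_apply, Fin.sum_univ_three, Matrix.one_apply] at n2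
      have x0 := congrFun h3 0
      have x1 := congrFun h3 1
      have x2 := congrFun h3 2
      simp [cross_apply, hc] at x0 x1 x2
      have hdetR : R.det = y := by
        rw [Matrix.det_fin_three]
        linear_combination R 0 2 * x0 + R 1 2 * x1 + R 2 2 * x2 + y * n2 + y * h6
      rw [Matrix.det_smul, hdetR]
      simp
      linear_combination (y^2 + 1) * h6
  · rintro ⟨hy, horth, hdet⟩
    have h6 : y ^ 2 = 1 := by rcases hy with h | h <;> rw [h] <;> norm_num
    have h1 : Rᵀ * R = y ^ 2 • (1 : Matrix (Fin 3) (Fin 3) ℝ) := by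
      have e : (y • R)ᵀ * (y • R) = (y^2) • (Rᵀ * R) := by
        rw [Matrix.transpose_smul, Matrix.smul_mul, Matrix.mul_smul, smul_smul]
        ring_nf
      rw [e, h6, one_smul] at horth
      rw [horth, h6, one_smul]
    have h1' : Rᵀ * R = 1 := by rw [h1, h6, one_smul]
    have h2 : R * Rᵀ = y ^ 2 • (1 : Matrix (Fin 3) (Fin 3) ℝ) := by
      rw [h6, one_smul]
      exact mul_eq_one_comm.mp h1'
    have hdetR : R.det = y := by
      rw [Matrix.det_smul] at hdet
      simp at hdet
      linear_combination y * hdet - R.det * (y^2 + 1) * h6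
    -- scalar orthonormality facts
    have n00 := congrFun (congrFun h1' 0) 0
    have n11 := congrFun (congrFun h1' 1) 1
    have n22 := congrFun (congrFun h1' 2) 2
    have n01 := congrFun (congrFun h1' 0) 1
    have n12 := congrFun (congrFun h1' 1) 2
    have n20 := congrFun (congrFun h1' 2) 0
    norm_num [Matrix.mul_apply, Fin.sum_univ_three, Matrix.one_apply]
      at n00 n11 n22 n01 n12 n20
    rw [if_neg (by decide)] at n12 n20
    have hd3 : R 0 0 * (R 1 1 * R 2 2 - R 2 1 * R 1 2) -
        R 0 1 * (R 1 0 * R 2 2 - R 2 0 * R 1 2) +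
        R 0 2 * (R 1 0 * R 2 1 - R 2 0 * R 1 1) = y := by
      rw [Matrix.det_fin_three] at hdetR
      linear_combination hdetR
    refine ⟨h1, h2, ?_, ?_, ?_, h6⟩
    · obtain ⟨g1, g2, g3⟩ := cross_aux (R 0 0) (R 1 0) (R 2 0) (R 0 1) (R 1 1) (R 2 1)
        (R 0 2) (R 1 2) (R 2 2) y
        (by linear_combination n00) (by linear_combination n11) (by linear_combination n22)
        (by linear_combination n01) (by linear_combination hd3) h6
      funext k
      fin_cases k <;> simp [cross_apply, hc] <;> linarith
    · obtain ⟨g1, g2, g3⟩ := cross_aux (R 0 1) (R 1 1) (R 2 1) (R 0 2) (R 1 2) (R 2 2)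
        (R 0 0) (R 1 0) (R 2 0) y
        (by linear_combination n11) (by linear_combination n22) (by linear_combination n00)
        (by linear_combination n12) (by linear_combination hd3) h6
      funext k
      fin_cases k <;> simp [cross_apply, hc] <;> linarith
    · obtain ⟨g1, g2, g3⟩ := cross_aux (R 0 2) (R 1 2) (R 2 2) (R 0 0) (R 1 0) (R 2 0)
        (R 0 1) (R 1 1) (R 2 1) y
        (by linear_combination n22) (by linear_combination n00) (by linear_combination n11)
        (by linear_combination n20) (by linear_combination hd3) h6
      funext k
      fin_cases k <;> simp [cross_apply, hc] <;> linarith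
end

section
/- (Equivalence of the homogenized QCQP and minimization over SO(3).) Let Q̄ be a 10×10 real symmetric matrix indexed by the entries of vec(R) together with one homogenization coordinate y. Let F be the set of pairs (R, y), with R a real 3×3 matrix and y ∈ ℝ, satisfying RᵀR = y²I₃, RRᵀ = y²I₃, cᵢ × cⱼ = y·c_k for every cyclic permutation (i,j,k) of (1,2,3) (c₁,c₂,c₃ the columns of R), and y² = 1. Then the infimum over (R, y) ∈ F of [vec(R); y]ᵀ Q̄ [vec(R); y] equals the infimum over R ∈ SO(3) of [vec(R); 1]ᵀ Q̄ [vec(R); 1]. -/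
open Matrix

/-- The homogenized variable `[vec(R); y] ∈ ℝ¹⁰`: the column-major vectorization
of `R` (indexed by pairs `(j, a)` with entry `R j a`) together with the
homogenization coordinate `y`. -/
def homogVec (R : Matrix (Fin 3) (Fin 3) ℝ) (y : ℝ) : (Fin 3 × Fin 3) ⊕ Unit → ℝ :=
  Sum.elim (fun p => R p.1 p.2) (fun _ => y)

-- Lemma A: det R = y from feasibility
lemma detA (R : Matrix (Fin 3) (Fin 3) ℝ) (y : ℝ)
    (h1 : Rᵀ * R = y ^ 2 • (1 : Matrix (Fin 3) (Fin 3) ℝ))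
    (h4 : (fun j => R j 1) ⨯₃ (fun j => R j 2) = y • (fun j => R j 0))
    (hy : y ^ 2 = 1) : R.det = y := by
  have hn := congrFun (congrFun h1 0) 0
  simp [Matrix.mul_apply, Fin.sum_univ_three, Matrix.one_apply] at hn
  have e0 := congrFun h4 0
  have e1 := congrFun h4 1
  have e2 := congrFun h4 2
  simp [cross_apply] at e0 e1 e2
  rw [Matrix.det_fin_three]
  linear_combination R 0 0 * e0 + R 1 0 * e1 + R 2 0 * e2 + y * hn + y * hy

-- Lemma B: cross constraints from SO(3)
lemma crossB (R : Matrix (Fin 3) (Fin 3) ℝ) (h1 : Rᵀ * R = 1) (hdet : R.det = 1) :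
    ((fun j => R j 0) ⨯₃ (fun j => R j 1) = (fun j => R j 2)) ∧
    ((fun j => R j 1) ⨯₃ (fun j => R j 2) = (fun j => R j 0)) ∧
    ((fun j => R j 2) ⨯₃ (fun j => R j 0) = (fun j => R j 1)) := by
  have h2 : R * Rᵀ = 1 := mul_eq_one_comm.mp h1
  have hadj : R.adjugate = Rᵀ := by
    calc R.adjugate = R.adjugate * (R * Rᵀ) := by rw [h2, Matrix.mul_one]
    _ = (R.adjugate * R) * Rᵀ := by rw [Matrix.mul_assoc]
    _ = Rᵀ := by rw [Matrix.adjugate_mul, hdet, one_smul, Matrix.one_mul]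
  rw [Matrix.adjugate_fin_three] at hadj
  have h := fun i j => congrFun (congrFun hadj i) j
  have h00 := h 0 0; have h01 := h 0 1; have h02 := h 0 2
  have h10 := h 1 0; have h11 := h 1 1; have h12 := h 1 2
  have h20 := h 2 0; have h21 := h 2 1; have h22 := h 2 2
  simp at h00 h01 h02 h10 h11 h12 h20 h21 h22
  refine ⟨?_, ?_, ?_⟩ <;> funext j <;> fin_cases j <;>
    simp [cross_apply] <;> linarith

/-- Equivalence of the homogenized QCQP and minimization over
SO(3): for any symmetric 10×10 matrix `Q̄`, the infimum of the homogeneous cost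
`[vec(R); y]ᵀ Q̄ [vec(R); y]` over the homogenized feasible set `F`
(`RᵀR = y²I₃`, `RRᵀ = y²I₃`, cyclic column cross-product constraints
`cᵢ × cⱼ = y • c_k`, and `y² = 1`) equals the infimum of
`[vec(R); 1]ᵀ Q̄ [vec(R); 1]` over `R ∈ SO(3)`. -/
theorem homogenized_qcqp_eq_so3_min
    (Qbar : Matrix ((Fin 3 × Fin 3) ⊕ Unit) ((Fin 3 × Fin 3) ⊕ Unit) ℝ)
    (hQ : Qbar.IsSymm) :
    sInf { q : ℝ | ∃ (R : Matrix (Fin 3) (Fin 3) ℝ) (y : ℝ),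
        (Rᵀ * R = y ^ 2 • (1 : Matrix (Fin 3) (Fin 3) ℝ) ∧
         R * Rᵀ = y ^ 2 • (1 : Matrix (Fin 3) (Fin 3) ℝ) ∧
         (fun j => R j 0) ⨯₃ (fun j => R j 1) = y • (fun j => R j 2) ∧
         (fun j => R j 1) ⨯₃ (fun j => R j 2) = y • (fun j => R j 0) ∧
         (fun j => R j 2) ⨯₃ (fun j => R j 0) = y • (fun j => R j 1) ∧
         y ^ 2 = 1) ∧
        q = homogVec R y ⬝ᵥ Qbar.mulVec (homogVec R y) } =
    sInf { q : ℝ | ∃ R : Matrix (Fin 3) (Fin 3) ℝ,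
        (Rᵀ * R = 1 ∧ R.det = 1) ∧
        q = homogVec R 1 ⬝ᵥ Qbar.mulVec (homogVec R 1) } := by
  congr 1
  ext q
  simp only [Set.mem_setOf_eq]
  constructor
  · rintro ⟨R, y, ⟨h1, h2, h3, h4, h5, hy⟩, rfl⟩
    have hdet : R.det = y := detA R y h1 h4 hy
    refine ⟨y • R, ⟨?_, ?_⟩, ?_⟩
    · rw [Matrix.transpose_smul, Matrix.smul_mul, Matrix.mul_smul, h1,
        smul_smul, smul_smul, show y * y * y ^ 2 = 1 by nlinarith [hy], one_smul]
    · rw [Matrix.det_smul, hdet]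
      have : y ^ (3:ℕ) * y = (y ^ 2) ^ 2 := by ring
      simp only [Fintype.card_fin, smul_eq_mul, this, hy, one_pow]
    · have hv : homogVec (y • R) 1 = y • homogVec R y := by
        funext x
        cases x with
        | inl p => simp [homogVec]
        | inr u =>
          simp [homogVec]
          nlinarith [hy]
      rw [hv, Matrix.mulVec_smul, dotProduct_smul, smul_dotProduct,
        smul_smul, smul_eq_mul, ← pow_two, hy, one_mul]
  · rintro ⟨R, ⟨h1, hdet⟩, rfl⟩
    obtain ⟨c1, c2, c3⟩ := crossB R h1 hdet
    refine ⟨R, 1, ⟨by simpa using h1, by simpa using mul_eq_one_comm.mp h1,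
      by simpa using c1, by simpa using c2, by simpa using c3, by norm_num⟩, rfl⟩
end
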